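/- Let W = H ≀ Sym(2) act on Δ² in product action, where T is a transitive normal subgroup of H ≤ Sym(Δ), and let G ≤ W contain N = T × T with G transitive on the two coordinate factors. Fix (ε₁, ε₂) ∈ Δ², let G₁ be the subgroup of G preserving the first coordinate, and let π₁ : G₁ → H be the first-coordinate projection. If π₁(G₁) = H, then π₁(G₁ ∩ G_{(ε₁,ε₂)}) = H_{ε₁}. -/

import Mathlib

/-- The reindexing action of `Sym(2)` on `Fin 2 → Sym(Δ)`, used to build the wreath
product `Sym(Δ) ≀ Sym(2)`. -/
def wreathPhi (Δ : Type*) : Equiv.Perm (Fin 2) →* MulAut (Fin 2 → Equiv.Perm Δ) where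
  toFun σ :=
    { toFun := fun f i => f (σ⁻¹ i)
      invFun := fun f i => f (σ i)
      left_inv := by intro f; funext i; simp
      right_inv := by intro f; funext i; simp
      map_mul' := fun f g => rfl }
  map_one' := by ext f i; simp
  map_mul' := by intro σ τ; ext f i; simp [mul_inv_rev]

/-- The wreath product `H ≀ Sym(2)` as a semidirect product acting on `Δ²` in product
action, with `g = ⟨f, σ⟩` sending `v` to `i ↦ f i (v (σ⁻¹ i))`. -/
abbrev Wreath2 (Δ : Type*) :=
  SemidirectProduct (Fin 2 → Equiv.Perm Δ) (Equiv.Perm (Fin 2)) (wreathPhi Δ)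

/-- Lemma `Psfavourite` (`n = 2` case): with `N = T × T ≤ G ≤ H ≀ Sym(2)` of product
action type and `π₁(G₁) = H`, one has `π₁(G₁ ∩ G_{(ε₁,ε₂)}) = H_{ε₁}`. -/
theorem projection_of_point_stabilizer {Δ : Type*}
    (H T : Subgroup (Equiv.Perm Δ)) (hTH : T ≤ H)
    (hTnormal : ∀ h ∈ H, ∀ t ∈ T, h * t * h⁻¹ ∈ T)
    (hTtrans : ∀ a b : Δ, ∃ t ∈ T, t a = b)
    (G : Subgroup (Wreath2 Δ))
    (hGW : ∀ g ∈ G, ∀ i : Fin 2, SemidirectProduct.left g i ∈ H)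
    (hNG : ∀ f : Fin 2 → Equiv.Perm Δ, (∀ i, f i ∈ T) → (⟨f, 1⟩ : Wreath2 Δ) ∈ G)
    (hGcoord : ∃ g ∈ G, SemidirectProduct.right g 0 = 1)
    (hsurj : ∀ h ∈ H, ∃ g ∈ G, SemidirectProduct.right g = 1 ∧
      SemidirectProduct.left g 0 = h)
    (ε₁ ε₂ : Δ) :
    ∀ h : Equiv.Perm Δ,
      (∃ g ∈ G, SemidirectProduct.right g = 1 ∧ SemidirectProduct.left g 0 = h ∧
        ∀ i : Fin 2,
          SemidirectProduct.left g i (![ε₁, ε₂] ((SemidirectProduct.right g)⁻¹ i)) =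
            ![ε₁, ε₂] i) ↔
      (h ∈ H ∧ h ε₁ = ε₁) := by
  intro h
  constructor
  · rintro ⟨g, hgG, hr, hl, hfix⟩
    refine ⟨hl ▸ hGW g hgG 0, ?_⟩
    have h0 := hfix 0
    rw [hr] at h0
    simpa [hl] using h0
  · rintro ⟨hH, hfixh⟩
    obtain ⟨g, hgG, hgr, hgl⟩ := hsurj h hH
    obtain ⟨t, htT, ht⟩ := hTtrans (SemidirectProduct.left g 1 ε₂) ε₂
    have hfT : ∀ i, (![1, t] : Fin 2 → Equiv.Perm Δ) i ∈ T := by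
      intro i; fin_cases i <;> simp [htT, T.one_mem]
    refine ⟨(⟨![1, t], 1⟩ : Wreath2 Δ) * g, mul_mem (hNG _ hfT) hgG, ?_, ?_, ?_⟩
    · simp [hgr]
    · simp [hgl]
    · intro i
      fin_cases i
      · simp only [SemidirectProduct.mul_left, SemidirectProduct.mul_right, hgr]
        simp [wreathPhi]
        change (g.left 0) ε₁ = ε₁
        rw [hgl, hfixh]
      · simp only [SemidirectProduct.mul_left, SemidirectProduct.mul_right, hgr]
        simp [wreathPhi]
        change t (g.left 1 ε₂) = ε₂
        exact ht
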